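/- Let J ∈ so(N) be invertible with exp(J/k) = Id_N in SO(N) for an integer k ≥ 1, and let γ ∈ ℂ with kγ = α + βτ, α,β ∈ ℤ. Then for R ∈ so(N,J): Z(γ,J;τ,N,o_N)(R) = ε(J/k,N)^{α+β} · Z(0,J;τ,N,o_N)(R), i.e. equals (ε(J/k,N))^{α+β} times Tr(e^R,W_{1,q}(N⊗ℂ))/Str(e^R,S_N,o_N). -/

import Mathlib

/- STATEMENT 14: if exp(J/k) = Id_N (so the rotation numbers of J are kA_j) and
kγ = α + βτ with α, β ∈ ℤ, then for R ∈ so(N,J):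
Z(γ,J;τ,N,o_N)(R) = ε(J/k,N)^{α+β} · Z(0,J;τ,N,o_N)(R)
  = ((-1)^{Σ A_j})^{α+β} · Tr(e^R,W_{1,q}(N⊗ℂ))/Str(e^R,S_N,o_N),
expressed in the diagonal model (`Zdiag` as in the paper). -/

open Complex Real

noncomputable section

def qhex (τ : ℂ) : ℂ := Complex.exp ((π : ℂ) * I * τ)

def qex (τ : ℂ) : ℂ := Complex.exp (2 * (π : ℂ) * I * τ)

def phiNumF (τ z : ℂ) (n : ℕ) : ℂ :=
  (1 + qhex τ ^ (2 * n + 1) * Complex.exp (2 * (π : ℂ) * I * z)) *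
    (1 + qhex τ ^ (2 * n + 1) * Complex.exp (-(2 * (π : ℂ) * I * z)))

def phiDenF (τ z : ℂ) (n : ℕ) : ℂ :=
  (1 - qex τ ^ (n + 1) * Complex.exp (2 * (π : ℂ) * I * z)) *
    (1 - qex τ ^ (n + 1) * Complex.exp (-(2 * (π : ℂ) * I * z)))

def Phi1 (τ z : ℂ) : ℂ :=
  (Complex.exp (-((π : ℂ) * I * z)) - Complex.exp ((π : ℂ) * I * z))⁻¹ *
    ((∏' n : ℕ, phiNumF τ z n) / (∏' n : ℕ, phiDenF τ z n))

def Zstr {m : ℕ} (ν : ℂ) (a : Fin m → ℤ) (r : Fin m → ℂ) (γ : ℂ) : ℂ :=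
  ν * ∏ j, (Complex.exp (-((π : ℂ) * I * ((a j : ℂ) * γ + r j))) -
      Complex.exp ((π : ℂ) * I * ((a j : ℂ) * γ + r j)))

/-- Z(γ,J;τ,N,o_N)(R) in the diagonal model:
Tr(e^{γJ}e^R,W_{1,q}(N⊗ℂ)) / Str(e^{γJ}e^R,S_N,o_N), with the trace on W_{1,q}(N⊗ℂ)
computed from the eigenvalues e^{±2iπ(a_jγ+r_j)} of e^{γJ}e^R. -/
def Zdiag (τ : ℂ) {m : ℕ} (ν : ℂ) (a : Fin m → ℤ) (r : Fin m → ℂ) (γ : ℂ) : ℂ :=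
  (∏ j, ∏' n : ℕ, phiNumF τ ((a j : ℂ) * γ + r j) n) /
    ((∏ j, ∏' n : ℕ, phiDenF τ ((a j : ℂ) * γ + r j) n) * Zstr ν a r γ)

namespace ZK

variable (τ : ℂ)

def Wz (z : ℂ) : ℂ := Complex.exp (2 * (π : ℂ) * I * z)
def Uz (z : ℂ) : ℂ := Complex.exp ((π : ℂ) * I * z)
def Pg (c : ℂ) : ℂ := ∏' n : ℕ, (1 + c * qex τ ^ n)
def Nn (z : ℂ) : ℂ := ∏' n : ℕ, phiNumF τ z n
def Dd (z : ℂ) : ℂ := ∏' n : ℕ, phiDenF τ z n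
def Pp (z : ℂ) : ℂ := Complex.exp (-((π : ℂ) * I * z)) - Complex.exp ((π : ℂ) * I * z)
def ff (z : ℂ) : ℂ := Nn τ z / (Dd τ z * Pp z)

def Good (z : ℂ) : Prop :=
  (∀ n : ℕ, 1 + (qhex τ * Wz z) * qex τ ^ n ≠ 0) ∧
  (∀ n : ℕ, 1 + (qhex τ * (Wz z)⁻¹) * qex τ ^ n ≠ 0) ∧
  (∀ n : ℕ, 1 + (-(qex τ * Wz z)) * qex τ ^ n ≠ 0) ∧
  (∀ n : ℕ, 1 + (-(qex τ * (Wz z)⁻¹)) * qex τ ^ n ≠ 0) ∧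
  (1 - Wz z ≠ 0)

variable {τ}

lemma hQ0 : qhex τ ≠ 0 := Complex.exp_ne_zero _
lemma hX0 : qex τ ≠ 0 := Complex.exp_ne_zero _
lemma hW0 (z : ℂ) : Wz z ≠ 0 := Complex.exp_ne_zero _
lemma hU0 (z : ℂ) : Uz z ≠ 0 := Complex.exp_ne_zero _

lemma hsq : qhex τ ^ 2 = qex τ := by
  rw [sq, qhex, qex, ← Complex.exp_add]; ring_nf

lemma hWU (z : ℂ) : Wz z = Uz z ^ 2 := by
  rw [sq, Wz, Uz, ← Complex.exp_add]; ring_nf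

lemma hX (hτ : 0 < τ.im) : ‖qex τ‖ < 1 := by
  rw [qex, Complex.norm_exp]
  rw [Real.exp_lt_one_iff]
  have : (2 * (π : ℂ) * I * τ).re = -(2 * π * τ.im) := by
    simp [Complex.mul_re, Complex.mul_im]
  rw [this]
  have := Real.pi_pos
  nlinarith

lemma exp_neg2 (z : ℂ) : Complex.exp (-(2 * (π : ℂ) * I * z)) = (Wz z)⁻¹ := by
  rw [Wz, ← Complex.exp_neg]

lemma hpow (n : ℕ) : qhex τ ^ (2 * n + 1) = qhex τ * qex τ ^ n := by
  rw [pow_succ, pow_mul, hsq, mul_comm]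

lemma phiNumF_eq (z : ℂ) (n : ℕ) :
    phiNumF τ z n =
      (1 + (qhex τ * Wz z) * qex τ ^ n) * (1 + (qhex τ * (Wz z)⁻¹) * qex τ ^ n) := by
  rw [phiNumF, exp_neg2, hpow]
  show (1 + qhex τ * qex τ ^ n * Wz z) * _ = _
  ring

lemma phiDenF_eq (z : ℂ) (n : ℕ) :
    phiDenF τ z n =
      (1 + (-(qex τ * Wz z)) * qex τ ^ n) * (1 + (-(qex τ * (Wz z)⁻¹)) * qex τ ^ n) := by
  rw [phiDenF, exp_neg2, pow_succ, mul_comm (qex τ ^ n) (qex τ)]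
  show (1 - qex τ * qex τ ^ n * Wz z) * _ = _
  ring

lemma Pp_eq (z : ℂ) : Pp z = (Uz z)⁻¹ * (1 - Wz z) := by
  rw [Pp, hWU, show Complex.exp (-((π : ℂ) * I * z)) = (Uz z)⁻¹ from by
    rw [Uz, ← Complex.exp_neg]]
  field_simp [hU0 z]
  rw [sq, Uz]

lemma W_shift (z : ℂ) : Wz (z + τ) = Wz z * qex τ := by
  rw [Wz, Wz, qex, ← Complex.exp_add]; ring_nf

lemma U_shift (z : ℂ) : Uz (z + τ) = Uz z * qhex τ := by
  rw [Uz, Uz, qhex, ← Complex.exp_add]; ring_nf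

lemma W_one (z : ℂ) : Wz (z + 1) = Wz z := by
  rw [Wz, Wz, show 2 * (π : ℂ) * I * (z + 1) = 2 * π * I * z + 2 * π * I by ring,
    Complex.exp_add, Complex.exp_two_pi_mul_I, mul_one]

lemma U_one (z : ℂ) : Uz (z + 1) = -Uz z := by
  rw [Uz, Uz, show (π : ℂ) * I * (z + 1) = π * I * z + π * I by ring,
    Complex.exp_add, Complex.exp_pi_mul_I]
  ring

lemma W_neg (z : ℂ) : Wz (-z) = (Wz z)⁻¹ := by
  rw [Wz, Wz, ← Complex.exp_neg]; ring_nf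

lemma U_neg (z : ℂ) : Uz (-z) = (Uz z)⁻¹ := by
  rw [Uz, Uz, ← Complex.exp_neg]; ring_nf

lemma summable_log_aux {x c : ℂ} (hx : ‖x‖ < 1) :
    Summable fun n : ℕ => Complex.log (1 + c * x ^ n) := by
  have hs : Summable fun n : ℕ => -(c * x ^ n) :=
    ((summable_geometric_of_norm_lt_one hx).mul_left c).neg
  have := hs.clog_one_sub
  simpa [sub_neg_eq_add] using this

lemma multipliable_aux {x c : ℂ} (hx : ‖x‖ < 1) (h : ∀ n : ℕ, 1 + c * x ^ n ≠ 0) :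
    Multipliable fun n : ℕ => 1 + c * x ^ n :=
  Complex.multipliable_of_summable_log (summable_log_aux hx)

lemma tprod_aux_ne_zero {x c : ℂ} (hx : ‖x‖ < 1) (h : ∀ n : ℕ, 1 + c * x ^ n ≠ 0) :
    (∏' n : ℕ, (1 + c * x ^ n)) ≠ 0 := by
  have this : Complex.exp (∑' n : ℕ, Complex.log (1 + c * x ^ n)) = ∏' n : ℕ, (1 + c * x ^ n) :=
    Complex.cexp_tsum_eq_tprod h (summable_log_aux hx)
  rw [← this]
  exact Complex.exp_ne_zero _

lemma tprod_aux_shift {x c : ℂ} (hx : ‖x‖ < 1) (h : ∀ n : ℕ, 1 + c * x ^ n ≠ 0) :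
    (∏' n : ℕ, (1 + c * x ^ n)) = (1 + c) * ∏' n : ℕ, (1 + (c * x) * x ^ n) := by
  have h2 : ∀ n : ℕ, (1 : ℂ) + (c * x) * x ^ n ≠ 0 := by
    intro n
    have := h (n + 1)
    rw [pow_succ] at this
    simpa [mul_comm, mul_assoc, mul_left_comm] using this
  have hm : Multipliable (fun n : ℕ => (1 : ℂ) + c * x ^ (n + 1)) :=
    (multipliable_aux hx h2).congr fun n => by rw [pow_succ]; ring
  rw [tprod_eq_zero_mul' (f := fun n : ℕ => 1 + c * x ^ n) hm]
  rw [pow_zero, mul_one]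
  congr 1
  exact tprod_congr fun n => by rw [pow_succ]; ring

section Decomp

variable (hτ : 0 < τ.im)
include hτ

lemma Pg_ne {c : ℂ} (h : ∀ n : ℕ, 1 + c * qex τ ^ n ≠ 0) : Pg τ c ≠ 0 :=
  tprod_aux_ne_zero (hX hτ) h

lemma Pg_shift {c : ℂ} (h : ∀ n : ℕ, 1 + c * qex τ ^ n ≠ 0) :
    Pg τ c = (1 + c) * Pg τ (c * qex τ) :=
  tprod_aux_shift (hX hτ) h

lemma Nn_eq {z : ℂ} (h1 : ∀ n : ℕ, 1 + (qhex τ * Wz z) * qex τ ^ n ≠ 0)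
    (h2 : ∀ n : ℕ, 1 + (qhex τ * (Wz z)⁻¹) * qex τ ^ n ≠ 0) :
    Nn τ z = Pg τ (qhex τ * Wz z) * Pg τ (qhex τ * (Wz z)⁻¹) := by
  rw [Nn, Pg, Pg, ← Multipliable.tprod_mul (multipliable_aux (hX hτ) h1) (multipliable_aux (hX hτ) h2)]
  exact tprod_congr (phiNumF_eq z)

lemma Dd_eq {z : ℂ} (h3 : ∀ n : ℕ, 1 + (-(qex τ * Wz z)) * qex τ ^ n ≠ 0)
    (h4 : ∀ n : ℕ, 1 + (-(qex τ * (Wz z)⁻¹)) * qex τ ^ n ≠ 0) :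
    Dd τ z = Pg τ (-(qex τ * Wz z)) * Pg τ (-(qex τ * (Wz z)⁻¹)) := by
  rw [Dd, Pg, Pg, ← Multipliable.tprod_mul (multipliable_aux (hX hτ) h3) (multipliable_aux (hX hτ) h4)]
  exact tprod_congr (phiDenF_eq z)

end Decomp

lemma step_alg (q u P1 P2 D1 D2 : ℂ) (hq : q ≠ 0) (hu : u ≠ 0)
    (hP1 : P1 ≠ 0) (hP2 : P2 ≠ 0) (hD1 : D1 ≠ 0) (hD2 : D2 ≠ 0)
    (h5 : 1 - u ^ 2 ≠ 0) (h3 : 1 - u ^ 2 * q ^ 2 ≠ 0) :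
    (P1 * ((1 + (q * (u ^ 2)⁻¹) * (q ^ 2)⁻¹) * P2)) /
      ((D1 * ((1 + (-(q ^ 2 * (u ^ 2)⁻¹)) * (q ^ 2)⁻¹) * D2)) *
        ((u * q)⁻¹ * (1 - u ^ 2 * q ^ 2)))
    = -(((1 + q * u ^ 2) * P1 * P2) /
      ((((1 + -(q ^ 2 * u ^ 2)) * D1) * D2) * ((u)⁻¹ * (1 - u ^ 2)))) := by
  have hu2 : (u : ℂ) ^ 2 ≠ 0 := pow_ne_zero 2 hu
  have hq2 : (q : ℂ) ^ 2 ≠ 0 := pow_ne_zero 2 hq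
  have e2 : 1 + (q * (u ^ 2)⁻¹) * (q ^ 2)⁻¹ = (q * u ^ 2)⁻¹ * (1 + q * u ^ 2) := by
    field_simp
    ring
  have e4 : 1 + (-(q ^ 2 * (u ^ 2)⁻¹)) * (q ^ 2)⁻¹ = -(u ^ 2)⁻¹ * (1 - u ^ 2) := by
    field_simp
    ring
  have e3 : 1 + -(q ^ 2 * u ^ 2) = 1 - u ^ 2 * q ^ 2 := by ring
  have hB : (D1 * ((-(u ^ 2)⁻¹ * (1 - u ^ 2)) * D2)) *
      ((u * q)⁻¹ * (1 - u ^ 2 * q ^ 2)) ≠ 0 := by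
    apply mul_ne_zero
    apply mul_ne_zero hD1
    apply mul_ne_zero (mul_ne_zero (neg_ne_zero.mpr (inv_ne_zero hu2)) h5) hD2
    exact mul_ne_zero (inv_ne_zero (mul_ne_zero hu hq)) h3
  have hC : (((1 - u ^ 2 * q ^ 2) * D1) * D2) * ((u)⁻¹ * (1 - u ^ 2)) ≠ 0 := by
    apply mul_ne_zero
    exact mul_ne_zero (mul_ne_zero h3 hD1) hD2
    exact mul_ne_zero (inv_ne_zero hu) h5
  rw [e2, e4, e3, ← neg_div, div_eq_div_iff hB hC]
  field_simp

section Step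

variable (hτ : 0 < τ.im)
include hτ

lemma good_shift {z : ℂ} (hz : Good τ z) : Good τ (z + τ) := by
  obtain ⟨h1, h2, h3, h4, h5⟩ := hz
  have c1' : qhex τ * Wz (z + τ) = (qhex τ * Wz z) * qex τ := by rw [W_shift]; ring
  have c2' : qhex τ * (Wz (z + τ))⁻¹ = (qhex τ * (Wz z)⁻¹) * (qex τ)⁻¹ := by
    rw [W_shift, mul_inv]; ring
  have d1' : -(qex τ * Wz (z + τ)) = (-(qex τ * Wz z)) * qex τ := by rw [W_shift]; ring
  have d2' : -(qex τ * (Wz (z + τ))⁻¹) = (-(qex τ * (Wz z)⁻¹)) * (qex τ)⁻¹ := by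
    rw [W_shift, mul_inv]; ring
  refine ⟨?_, ?_, ?_, ?_, ?_⟩
  · intro n
    rw [c1']
    have e : 1 + ((qhex τ * Wz z) * qex τ) * qex τ ^ n
        = 1 + (qhex τ * Wz z) * qex τ ^ (n + 1) := by ring
    rw [e]
    exact h1 (n + 1)
  · intro n
    rw [c2']
    cases n with
    | zero =>
      have e : 1 + ((qhex τ * (Wz z)⁻¹) * (qex τ)⁻¹) * qex τ ^ 0
          = (qhex τ * Wz z)⁻¹ * (1 + qhex τ * Wz z) := by
        rw [← hsq]
        field_simp [hQ0, hW0 z]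
        ring
      rw [e]
      exact mul_ne_zero (inv_ne_zero (mul_ne_zero hQ0 (hW0 z))) (by simpa using h1 0)
    | succ n =>
      have e : 1 + ((qhex τ * (Wz z)⁻¹) * (qex τ)⁻¹) * qex τ ^ (n + 1)
          = 1 + (qhex τ * (Wz z)⁻¹) * qex τ ^ n := by
        rw [pow_succ]
        field_simp [hX0, hW0 z]
      rw [e]
      exact h2 n
  · intro n
    rw [d1']
    have e : 1 + ((-(qex τ * Wz z)) * qex τ) * qex τ ^ n
        = 1 + (-(qex τ * Wz z)) * qex τ ^ (n + 1) := by ring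
    rw [e]
    exact h3 (n + 1)
  · intro n
    rw [d2']
    cases n with
    | zero =>
      have e : 1 + ((-(qex τ * (Wz z)⁻¹)) * (qex τ)⁻¹) * qex τ ^ 0
          = (Wz z)⁻¹ * (Wz z - 1) := by
        field_simp [hX0, hW0 z]
        ring
      rw [e]
      exact mul_ne_zero (inv_ne_zero (hW0 z)) (fun hh => h5 (by linear_combination -hh))
    | succ n =>
      have e : 1 + ((-(qex τ * (Wz z)⁻¹)) * (qex τ)⁻¹) * qex τ ^ (n + 1)
          = 1 + (-(qex τ * (Wz z)⁻¹)) * qex τ ^ n := by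
        rw [pow_succ]
        field_simp [hX0, hW0 z]
      rw [e]
      exact h4 n
  · rw [W_shift]
    have := h3 0
    rw [pow_zero, mul_one] at this
    intro hh
    exact this (by linear_combination hh)

lemma f_step {z : ℂ} (hz : Good τ z) : ff τ (z + τ) = -ff τ z := by
  obtain ⟨g1, g2, g3, g4, g5⟩ := good_shift hτ hz
  obtain ⟨h1, h2, h3, h4, h5⟩ := hz
  have c1' : qhex τ * Wz (z + τ) = (qhex τ * Wz z) * qex τ := by rw [W_shift]; ring
  have c2' : qhex τ * (Wz (z + τ))⁻¹ = (qhex τ * (Wz z)⁻¹) * (qex τ)⁻¹ := by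
    rw [W_shift, mul_inv]; ring
  have d1' : -(qex τ * Wz (z + τ)) = (-(qex τ * Wz z)) * qex τ := by rw [W_shift]; ring
  have d2' : -(qex τ * (Wz (z + τ))⁻¹) = (-(qex τ * (Wz z)⁻¹)) * (qex τ)⁻¹ := by
    rw [W_shift, mul_inv]; ring
  have g1' := g1; rw [c1'] at g1'
  have g2' := g2; rw [c2'] at g2'
  have g3' := g3; rw [d1'] at g3'
  have g4' := g4; rw [d2'] at g4'
  have eN : Nn τ z = (1 + qhex τ * Wz z) * Pg τ ((qhex τ * Wz z) * qex τ)
      * Pg τ (qhex τ * (Wz z)⁻¹) := by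
    rw [Nn_eq hτ h1 h2, Pg_shift hτ h1]
  have eN' : Nn τ (z + τ) = Pg τ ((qhex τ * Wz z) * qex τ) *
      ((1 + (qhex τ * (Wz z)⁻¹) * (qex τ)⁻¹) * Pg τ (qhex τ * (Wz z)⁻¹)) := by
    rw [Nn_eq hτ g1 g2, c1', c2', Pg_shift hτ g2']
    have e : (qhex τ * (Wz z)⁻¹ * (qex τ)⁻¹) * qex τ = qhex τ * (Wz z)⁻¹ := by
      rw [mul_assoc, inv_mul_cancel₀ hX0, mul_one]
    rw [e]
  have eD : Dd τ z = (1 + -(qex τ * Wz z)) * Pg τ ((-(qex τ * Wz z)) * qex τ)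
      * Pg τ (-(qex τ * (Wz z)⁻¹)) := by
    rw [Dd_eq hτ h3 h4, Pg_shift hτ h3]
  have eD' : Dd τ (z + τ) = Pg τ ((-(qex τ * Wz z)) * qex τ) *
      ((1 + (-(qex τ * (Wz z)⁻¹)) * (qex τ)⁻¹) * Pg τ (-(qex τ * (Wz z)⁻¹))) := by
    rw [Dd_eq hτ g3 g4, d1', d2', Pg_shift hτ g4']
    have e : (-(qex τ * (Wz z)⁻¹) * (qex τ)⁻¹) * qex τ = -(qex τ * (Wz z)⁻¹) := by
      rw [mul_assoc, inv_mul_cancel₀ hX0, mul_one]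
    rw [e]
  have eP : Pp z = (Uz z)⁻¹ * (1 - Wz z) := Pp_eq z
  have eP' : Pp (z + τ) = (Uz z * qhex τ)⁻¹ * (1 - Wz z * qex τ) := by
    rw [Pp_eq, U_shift, W_shift]
  have nP1 := Pg_ne hτ g1'
  have nP2 := Pg_ne hτ h2
  have nD1 := Pg_ne hτ g3'
  have nD2 := Pg_ne hτ h4
  have g5' : 1 - Wz z * qex τ ≠ 0 := by rw [← W_shift]; exact g5
  have h5' := h5
  rw [ff, ff, eN, eN', eD, eD', eP, eP']
  rw [hWU z] at nP1 nP2 nD1 nD2 g5' h5' ⊢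
  rw [← hsq] at nP1 nD1 nD2 g5' ⊢
  exact step_alg (qhex τ) (Uz z) _ _ _ _ hQ0 (hU0 z) nP1 nP2 nD1 nD2 h5' g5'

end Step

lemma Nn_one (z : ℂ) : Nn τ (z + 1) = Nn τ z :=
  tprod_congr fun n => by rw [phiNumF_eq, phiNumF_eq, W_one]

lemma Dd_one (z : ℂ) : Dd τ (z + 1) = Dd τ z :=
  tprod_congr fun n => by rw [phiDenF_eq, phiDenF_eq, W_one]

lemma Pp_one (z : ℂ) : Pp (z + 1) = -Pp z := by
  rw [Pp_eq, Pp_eq, U_one, W_one, inv_neg]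
  ring

lemma good_one (z : ℂ) : Good τ (z + 1) ↔ Good τ z := by
  unfold Good
  rw [W_one]

lemma f_one (z : ℂ) : ff τ (z + 1) = -ff τ z := by
  rw [ff, ff, Nn_one, Dd_one, Pp_one, mul_neg, div_neg]

lemma Nn_neg (z : ℂ) : Nn τ (-z) = Nn τ z :=
  tprod_congr fun n => by rw [phiNumF_eq, phiNumF_eq, W_neg, inv_inv]; ring

lemma Dd_neg (z : ℂ) : Dd τ (-z) = Dd τ z :=
  tprod_congr fun n => by rw [phiDenF_eq, phiDenF_eq, W_neg, inv_inv]; ring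

lemma Pp_neg (z : ℂ) : Pp (-z) = -Pp z := by
  rw [Pp_eq, Pp_eq, U_neg, W_neg, inv_inv, hWU z]
  have hu := hU0 z
  field_simp
  ring

lemma one_sub_inv_ne {w : ℂ} (hw : w ≠ 0) : (1 - w⁻¹ ≠ 0) ↔ (1 - w ≠ 0) := by
  rw [sub_ne_zero, sub_ne_zero]
  constructor
  · intro h he
    exact h (by rw [← he, inv_one])
  · intro h he
    exact h (by rw [eq_comm, inv_eq_one] at he; rw [he])

lemma good_neg (z : ℂ) : Good τ (-z) ↔ Good τ z := by
  unfold Good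
  rw [W_neg, inv_inv]
  rw [one_sub_inv_ne (hW0 z)]
  tauto

lemma f_neg (z : ℂ) : ff τ (-z) = -ff τ z := by
  rw [ff, ff, Nn_neg, Dd_neg, Pp_neg, mul_neg, div_neg]

section Steps

variable (hτ : 0 < τ.im)
include hτ

lemma good_shift_down {z : ℂ} (hz : Good τ z) : Good τ (z - τ) := by
  have h1 : Good τ (-z) := (good_neg z).mpr hz
  have h2 := good_shift hτ h1
  rw [show -z + τ = -(z - τ) by ring, good_neg] at h2
  exact h2

lemma f_step_down {z : ℂ} (hz : Good τ z) : ff τ (z - τ) = -ff τ z := by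
  have h1 : Good τ (-z) := (good_neg z).mpr hz
  have h2 := f_step hτ h1
  rw [show -z + τ = -(z - τ) by ring, f_neg, f_neg] at h2
  linear_combination -h2

lemma tau_int (b : ℤ) {z : ℂ} (hz : Good τ z) :
    Good τ (z + (b : ℂ) * τ) ∧ ff τ (z + (b : ℂ) * τ) = (-1 : ℂ) ^ b * ff τ z := by
  induction b using Int.induction_on with
  | zero => simpa using hz
  | succ b ih =>
    have e : z + ((b : ℂ) + 1) * τ = (z + (b : ℂ) * τ) + τ := by ring
    push_cast
    push_cast at ih
    rw [e]
    refine ⟨good_shift hτ ih.1, ?_⟩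
    rw [f_step hτ ih.1, ih.2, zpow_add₀ (by norm_num : (-1 : ℂ) ≠ 0), zpow_one]
    ring
  | pred b ih =>
    have e : z + (-(b : ℂ) - 1) * τ = (z + (-b : ℂ) * τ) - τ := by ring
    push_cast
    push_cast at ih
    rw [e]
    refine ⟨good_shift_down hτ ih.1, ?_⟩
    rw [f_step_down hτ ih.1, ih.2, zpow_sub₀ (by norm_num : (-1 : ℂ) ≠ 0), zpow_one]
    ring

end Steps

lemma f_one_down (z : ℂ) : ff τ (z - 1) = -ff τ z := by
  have := f_one (τ := τ) (z - 1)
  rw [show z - 1 + 1 = z by ring] at this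
  linear_combination this

lemma one_int (a : ℤ) (z : ℂ) : ff τ (z + (a : ℂ)) = (-1 : ℂ) ^ a * ff τ z := by
  induction a using Int.induction_on with
  | zero => simp
  | succ a ih =>
    have e : z + ((a : ℂ) + 1) = (z + (a : ℂ)) + 1 := by ring
    push_cast
    push_cast at ih
    rw [e, f_one, ih, zpow_add₀ (by norm_num : (-1 : ℂ) ≠ 0), zpow_one]
    ring
  | pred a ih =>
    have e : z + (-(a : ℂ) - 1) = (z + (-a : ℂ)) - 1 := by ring
    push_cast
    push_cast at ih
    rw [e, f_one_down, ih, zpow_sub₀ (by norm_num : (-1 : ℂ) ≠ 0), zpow_one]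
    ring

lemma main_shift (hτ : 0 < τ.im) (a b : ℤ) {z : ℂ} (hz : Good τ z) :
    ff τ (z + ((a : ℂ) + (b : ℂ) * τ)) = (-1 : ℂ) ^ (a + b) * ff τ z := by
  have h1 := tau_int hτ b hz
  have e : z + ((a : ℂ) + (b : ℂ) * τ) = (z + (b : ℂ) * τ) + (a : ℂ) := by ring
  rw [e, one_int, h1.2, zpow_add₀ (by norm_num : (-1 : ℂ) ≠ 0)]
  ring

lemma good_of {z : ℂ} (hn : ∀ n, phiNumF τ z n ≠ 0) (hd : ∀ n, phiDenF τ z n ≠ 0)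
    (hp : Complex.exp (-((π : ℂ) * I * z)) - Complex.exp ((π : ℂ) * I * z) ≠ 0) :
    Good τ z := by
  have hp' : Pp z ≠ 0 := hp
  rw [Pp_eq] at hp'
  refine ⟨fun n => ?_, fun n => ?_, fun n => ?_, fun n => ?_, ?_⟩
  · exact (mul_ne_zero_iff.mp (by rw [← phiNumF_eq]; exact hn n)).1
  · exact (mul_ne_zero_iff.mp (by rw [← phiNumF_eq]; exact hn n)).2
  · exact (mul_ne_zero_iff.mp (by rw [← phiDenF_eq]; exact hd n)).1
  · exact (mul_ne_zero_iff.mp (by rw [← phiDenF_eq]; exact hd n)).2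
  · exact (mul_ne_zero_iff.mp hp').2

end ZK

lemma prod_zpow_aux {ι : Type*} (s : Finset ι) (n : ι → ℤ) :
    ∏ j ∈ s, ((-1 : ℂ) ^ (n j)) = (-1 : ℂ) ^ (∑ j ∈ s, n j) := by
  induction s using Finset.cons_induction with
  | empty => simp
  | cons a s ha ih =>
    rw [Finset.prod_cons, Finset.sum_cons, ih, zpow_add₀ (by norm_num : (-1 : ℂ) ≠ 0)]

lemma Zdiag_eq (τ : ℂ) {m : ℕ} (ν : ℂ) (a : Fin m → ℤ) (r : Fin m → ℂ) (γ : ℂ) :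
    Zdiag τ ν a r γ = ν⁻¹ * ∏ j, ZK.ff τ ((a j : ℂ) * γ + r j) := by
  unfold Zdiag Zstr ZK.ff ZK.Nn ZK.Dd ZK.Pp
  rw [Finset.prod_div_distrib, Finset.prod_mul_distrib]
  rw [div_eq_mul_inv, div_eq_mul_inv, mul_inv, mul_inv, mul_inv]
  ring

theorem Zdiag_order_k (τ : ℂ) (hτ : 0 < τ.im) {m : ℕ} (ν : ℂ) (hν : ν = 1 ∨ ν = -1)
    (k α β : ℤ) (hk : 1 ≤ k) (γ : ℂ) (hkγ : (k : ℂ) * γ = (α : ℂ) + (β : ℂ) * τ)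
    (A : Fin m → ℤ) (r : Fin m → ℂ)
    (hpre : ∀ j, Complex.exp (-((π : ℂ) * I * (((k * A j : ℤ) : ℂ) * γ + r j))) -
      Complex.exp ((π : ℂ) * I * (((k * A j : ℤ) : ℂ) * γ + r j)) ≠ 0)
    (hpre0 : ∀ j, Complex.exp (-((π : ℂ) * I * (r j))) -
      Complex.exp ((π : ℂ) * I * (r j)) ≠ 0)
    (hden : ∀ j n, phiDenF τ (((k * A j : ℤ) : ℂ) * γ + r j) n ≠ 0)
    (hden0 : ∀ j n, phiDenF τ (r j) n ≠ 0)
    (hnum : ∀ j n, phiNumF τ (((k * A j : ℤ) : ℂ) * γ + r j) n ≠ 0)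
    (hnum0 : ∀ j n, phiNumF τ (r j) n ≠ 0) :
    Zdiag τ ν (fun j => k * A j) r γ =
      ((-1 : ℂ) ^ (∑ j, A j)) ^ (α + β) * Zdiag τ ν (fun j => k * A j) r 0 := by
  have goodr : ∀ j, ZK.Good τ (r j) := fun j => ZK.good_of (hnum0 j) (hden0 j) (hpre0 j)
  have key : ∀ j : Fin m, ZK.ff τ (((k * A j : ℤ) : ℂ) * γ + r j)
      = ((-1 : ℂ) ^ (A j * α + A j * β)) * ZK.ff τ (r j) := by
    intro j
    have e : ((k * A j : ℤ) : ℂ) * γ + r j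
        = r j + (((A j * α : ℤ) : ℂ) + ((A j * β : ℤ) : ℂ) * τ) := by
      push_cast
      linear_combination (A j : ℂ) * hkγ
    rw [e, ZK.main_shift hτ (A j * α) (A j * β) (goodr j)]
  rw [Zdiag_eq, Zdiag_eq]
  simp only [mul_zero, zero_mul, zero_add]
  rw [Finset.prod_congr rfl (fun j _ => key j)]
  rw [Finset.prod_mul_distrib, prod_zpow_aux]
  have e2 : (∑ j, (A j * α + A j * β)) = (∑ j, A j) * (α + β) := by
    rw [Finset.sum_mul]
    exact Finset.sum_congr rfl fun j _ => by ring
  rw [e2, zpow_mul]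
  ring

end
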